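/- Let α(I) = I²·sinh(π(I−1)/2)/((I−1)²·sinh(πI/2)) and let μ ≠ 0. If 1/|μ| > e^{−π/2}, then there exists a unique I_r ∈ (1,+∞) with α(I_r) = 1/|μ|, and α(I) > 1/|μ| for all I ∈ (1, I_r) while α(I) < 1/|μ| for all I ∈ (I_r, +∞). If instead 1/|μ| ≤ e^{−π/2}, then α(I) > 1/|μ| for all I > 1. -/

import Mathlib

open Real

/-- `α(I) = I² sinh(π(I-1)/2) / ((I-1)² sinh(πI/2))`. -/
noncomputable def alphaFn (I : ℝ) : ℝ :=
  I ^ 2 * Real.sinh (π * (I - 1) / 2) / ((I - 1) ^ 2 * Real.sinh (π * I / 2))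

open Filter Set

noncomputable def hFn (x : ℝ) : ℝ := Real.log (Real.sinh (π * x / 2)) - 2 * Real.log x
noncomputable def hFn' (x : ℝ) : ℝ :=
  π / 2 * (Real.cosh (π * x / 2) / Real.sinh (π * x / 2)) - 2 / x

lemma sinh_arg_pos {x : ℝ} (hx : 0 < x) : 0 < Real.sinh (π * x / 2) :=
  Real.sinh_pos_iff.2 (by positivity)

lemma hasDerivAt_inner (x : ℝ) :
    HasDerivAt (fun y : ℝ => Real.sinh (π * y / 2)) (Real.cosh (π * x / 2) * (π / 2)) x := by
  have h1 : HasDerivAt (fun y : ℝ => π * y / 2) (π / 2) x := by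
    simpa using ((hasDerivAt_id x).const_mul π).div_const 2
  exact (Real.hasDerivAt_sinh _).comp x h1

lemma hFn_hasDeriv {x : ℝ} (hx : 0 < x) : HasDerivAt hFn (hFn' x) x := by
  have hs := sinh_arg_pos hx
  have h1 : HasDerivAt (fun y : ℝ => Real.log (Real.sinh (π * y / 2)))
      (Real.cosh (π * x / 2) * (π / 2) / Real.sinh (π * x / 2)) x :=
    (hasDerivAt_inner x).log hs.ne'
  have h2 : HasDerivAt (fun y : ℝ => 2 * Real.log y) (2 * x⁻¹) x :=
    (Real.hasDerivAt_log hx.ne').const_mul 2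
  have := h1.sub h2
  refine this.congr_deriv ?_
  unfold hFn'
  rw [div_eq_mul_inv 2 x]
  ring

lemma hFn'_hasDeriv {x : ℝ} (hx : 0 < x) :
    HasDerivAt hFn' (2 / x ^ 2 - (π / 2) ^ 2 / Real.sinh (π * x / 2) ^ 2) x := by
  have hs := sinh_arg_pos hx
  have hc : HasDerivAt (fun y : ℝ => Real.cosh (π * y / 2)) (Real.sinh (π * x / 2) * (π / 2)) x := by
    have h1 : HasDerivAt (fun y : ℝ => π * y / 2) (π / 2) x := by
      simpa using ((hasDerivAt_id x).const_mul π).div_const 2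
    exact (Real.hasDerivAt_cosh _).comp x h1
  have hq := (hc.div (hasDerivAt_inner x) hs.ne').const_mul (π / 2)
  have hinv : HasDerivAt (fun y : ℝ => 2 / y) (2 * -(x ^ 2)⁻¹) x := by
    simpa [div_eq_mul_inv, mul_comm] using ((hasDerivAt_inv hx.ne').const_mul 2)
  have := hq.sub hinv
  have heq : (fun y : ℝ => π / 2 * (Real.cosh (π * y / 2) / Real.sinh (π * y / 2)) - 2 / y) = hFn' := rfl
  refine this.congr_deriv ?_
  have hcs : Real.cosh (π * x / 2) ^ 2 = Real.sinh (π * x / 2) ^ 2 + 1 := Real.cosh_sq _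
  have hnum : Real.sinh (π * x / 2) * (π / 2) * Real.sinh (π * x / 2)
      - Real.cosh (π * x / 2) * (Real.cosh (π * x / 2) * (π / 2)) = -(π / 2) := by
    linear_combination (-(π / 2)) * hcs
  rw [hnum]
  field_simp
  ring

lemma hFn'_strictMono : StrictMonoOn hFn' (Set.Ioi 0) := by
  apply strictMonoOn_of_deriv_pos (convex_Ioi 0)
  · exact fun x hx => ((hFn'_hasDeriv hx).continuousAt).continuousWithinAt
  · intro x hx
    rw [interior_Ioi] at hx
    have hx0 : (0:ℝ) < x := hx
    rw [(hFn'_hasDeriv hx0).deriv]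
    have hs := sinh_arg_pos hx0
    have hlt : π * x / 2 < Real.sinh (π * x / 2) :=
      Real.self_lt_sinh_iff.2 (by positivity)
    have hS2 : (π * x / 2) ^ 2 < Real.sinh (π * x / 2) ^ 2 :=
      pow_lt_pow_left₀ hlt (by positivity) (by norm_num)
    rw [sub_pos, div_lt_div_iff₀ (pow_pos hs 2) (by positivity)]
    nlinarith [hS2]

noncomputable def psiFn (I : ℝ) : ℝ := hFn (I - 1) - hFn I

lemma psi_hasDeriv {I : ℝ} (hI : 1 < I) :
    HasDerivAt psiFn (hFn' (I - 1) - hFn' I) I := by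
  have h1 : HasDerivAt (fun y : ℝ => hFn (y - 1)) (hFn' (I - 1)) I := by
    exact ((hFn_hasDeriv (show (0:ℝ) < I - 1 by linarith)).comp I
      ((hasDerivAt_id I).sub_const 1)).congr_deriv (mul_one _)
  exact h1.sub (hFn_hasDeriv (show (0:ℝ) < I by linarith))

lemma psi_strictAnti : StrictAntiOn psiFn (Set.Ioi 1) := by
  apply strictAntiOn_of_deriv_neg (convex_Ioi 1)
  · exact fun x hx => ((psi_hasDeriv hx).continuousAt).continuousWithinAt
  · intro x hx
    rw [interior_Ioi] at hx
    rw [(psi_hasDeriv hx).deriv, sub_neg]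
    have hx' : (1:ℝ) < x := hx
    exact hFn'_strictMono (Set.mem_Ioi.2 (by linarith)) (Set.mem_Ioi.2 (by linarith)) (by linarith)

lemma alpha_eq {I : ℝ} (hI : 1 < I) : alphaFn I = Real.exp (psiFn I) := by
  have h0 : (0:ℝ) < I := by linarith
  have h1 : (0:ℝ) < I - 1 := by linarith
  have hsI := sinh_arg_pos h0
  have hsI1 := sinh_arg_pos h1
  unfold alphaFn psiFn hFn
  rw [show Real.log (Real.sinh (π*(I-1)/2)) - 2*Real.log (I-1) -
        (Real.log (Real.sinh (π*I/2)) - 2*Real.log I)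
      = (Real.log (Real.sinh (π*(I-1)/2)) + (Real.log I + Real.log I)) -
        (Real.log (Real.sinh (π*I/2)) + (Real.log (I-1) + Real.log (I-1))) by ring,
    Real.exp_sub, Real.exp_add, Real.exp_add, Real.exp_add, Real.exp_add,
    Real.exp_log hsI1, Real.exp_log hsI, Real.exp_log h0, Real.exp_log h1]
  field_simp

lemma alpha_strictAnti : StrictAntiOn alphaFn (Set.Ioi 1) := by
  intro I hI J hJ hIJ
  rw [alpha_eq hI, alpha_eq hJ]
  exact Real.exp_lt_exp.2 (psi_strictAnti hI hJ hIJ)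

lemma alpha_pos {I : ℝ} (hI : 1 < I) : 0 < alphaFn I := by
  rw [alpha_eq hI]; exact Real.exp_pos _

lemma alpha_contOn : ContinuousOn alphaFn (Set.Ioi 1) := by
  apply ContinuousOn.div
  · fun_prop
  · fun_prop
  · intro I hI
    have hI' : (1:ℝ) < I := hI
    exact mul_ne_zero (pow_ne_zero 2 (by intro h; rw [sub_eq_zero] at h; linarith))
      (sinh_arg_pos (show (0:ℝ) < I by linarith)).ne'

lemma alpha_tendsto_one : Tendsto alphaFn (nhdsWithin 1 (Set.Ioi 1)) atTop := by
  have hb : Tendsto (fun I : ℝ => π / 2 * ((I - 1) * Real.sinh (π * I / 2))⁻¹)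
      (nhdsWithin 1 (Set.Ioi 1)) atTop := by
    apply Tendsto.const_mul_atTop (by positivity : (0:ℝ) < π / 2)
    apply tendsto_inv_nhdsGT_zero.comp
    rw [tendsto_nhdsWithin_iff]
    constructor
    · have : Tendsto (fun I : ℝ => (I - 1) * Real.sinh (π * I / 2)) (nhdsWithin 1 (Set.Ioi 1)) (nhds ((1 - 1) * Real.sinh (π * 1 / 2))) := by
        apply Tendsto.mono_left _ nhdsWithin_le_nhds
        exact ((by fun_prop : Continuous fun I : ℝ => (I - 1) * Real.sinh (π * I / 2)).tendsto 1)
      simpa using this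
    · filter_upwards [self_mem_nhdsWithin] with I hI
      have hI' : (1:ℝ) < I := hI
      exact Set.mem_Ioi.2 (mul_pos (by linarith) (sinh_arg_pos (by linarith)))
  apply tendsto_atTop_mono' _ _ hb
  filter_upwards [self_mem_nhdsWithin] with I hI
  have hI' : (1:ℝ) < I := hI
  have h1 : (0:ℝ) < I - 1 := by linarith
  have hs2 := sinh_arg_pos (show (0:ℝ) < I by linarith)
  have hsb : π * (I - 1) / 2 ≤ Real.sinh (π * (I - 1) / 2) :=
    (Real.self_lt_sinh_iff.2 (by positivity)).le
  have hIsq : (1:ℝ) ≤ I ^ 2 := by nlinarith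
  unfold alphaFn
  rw [le_div_iff₀ (by positivity)]
  have key : π / 2 * ((I - 1) * Real.sinh (π * I / 2))⁻¹ * ((I - 1) ^ 2 * Real.sinh (π * I / 2))
      = π * (I - 1) / 2 := by
    field_simp
  rw [key]
  calc π * (I - 1) / 2 ≤ Real.sinh (π * (I - 1) / 2) := hsb
    _ ≤ I ^ 2 * Real.sinh (π * (I - 1) / 2) := by nlinarith [sinh_arg_pos h1]

lemma alpha_tendsto_atTop : Tendsto alphaFn atTop (nhds (Real.exp (-(π / 2)))) := by
  have hfactor : ∀ I : ℝ, 1 < I → alphaFn I =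
      (I / (I - 1)) ^ 2 * ((Real.exp (-(π/2)) - Real.exp (π/2) * Real.exp (-(π * I))) /
        (1 - Real.exp (-(π * I)))) := by
    intro I hI
    have h1 : (0:ℝ) < I - 1 := by linarith
    have hs2 := sinh_arg_pos (show (0:ℝ) < I by linarith)
    have hden : (1:ℝ) - Real.exp (-(π * I)) ≠ 0 := by
      have : Real.exp (-(π * I)) < 1 := by
        rw [Real.exp_lt_one_iff]
        have : (0:ℝ) < π * I := by positivity
        linarith
      linarith
    set u := Real.exp (π * I / 2) with hu
    set k := Real.exp (π / 2) with hk
    have hupos : (0:ℝ) < u := Real.exp_pos _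
    have hkpos : (0:ℝ) < k := Real.exp_pos _
    have e1 : Real.exp (π * (I - 1) / 2) = u / k := by
      rw [hu, hk, ← Real.exp_sub]; ring_nf
    have e2 : Real.exp (-(π * (I - 1) / 2)) = k / u := by
      rw [hu, hk, ← Real.exp_sub]; ring_nf
    have e3 : Real.exp (-(π * I / 2)) = 1 / u := by
      rw [Real.exp_neg, hu, one_div]
    have e4 : Real.exp (-(π * I)) = (u * u)⁻¹ := by
      rw [Real.exp_neg]
      congr 1
      rw [hu, ← Real.exp_add]; ring_nf
    have e5 : Real.exp (-(π / 2)) = 1 / k := by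
      rw [Real.exp_neg, hk, one_div]
    have hsinh : Real.sinh (π * (I - 1) / 2) / Real.sinh (π * I / 2)
        = (Real.exp (-(π/2)) - Real.exp (π/2) * Real.exp (-(π * I))) / (1 - Real.exp (-(π * I))) := by
      rw [div_eq_div_iff hs2.ne' hden]
      rw [Real.sinh_eq, Real.sinh_eq, e1, e2, e3, e4, e5, ← hk]
      field_simp
      ring_nf
      rw [show rexp (π * I * (1 / 2)) = u by rw [hu]; ring_nf]
      ring
    have hsplit : alphaFn I = (I / (I - 1)) ^ 2 *
        (Real.sinh (π * (I - 1) / 2) / Real.sinh (π * I / 2)) := by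
      unfold alphaFn
      rw [div_pow]
      field_simp
    rw [hsplit, hsinh, hk]
  have t1 : Tendsto (fun I : ℝ => I / (I - 1)) atTop (nhds 1) := by
    have h0 : Tendsto (fun I : ℝ => I - 1) atTop atTop :=
      tendsto_atTop_add_const_right _ (-1) tendsto_id
    have h : Tendsto (fun I : ℝ => 1 + (I - 1)⁻¹) atTop (nhds (1 + 0)) :=
      tendsto_const_nhds.add (tendsto_inv_atTop_zero.comp h0)
    rw [add_zero] at h
    apply h.congr'
    filter_upwards [eventually_gt_atTop (1:ℝ)] with I hI
    have : I - 1 ≠ 0 := by intro hc; rw [sub_eq_zero] at hc; exact absurd hc.symm hI.ne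
    field_simp
    ring
  have t2 : Tendsto (fun I : ℝ => Real.exp (-(π * I))) atTop (nhds 0) := by
    apply Real.tendsto_exp_atBot.comp
    exact tendsto_neg_atTop_atBot.comp (tendsto_id.const_mul_atTop pi_pos)
  have t3 : Tendsto (fun I : ℝ =>
      (Real.exp (-(π/2)) - Real.exp (π/2) * Real.exp (-(π * I))) / (1 - Real.exp (-(π * I))))
      atTop (nhds (Real.exp (-(π/2)))) := by
    have hnum : Tendsto (fun I : ℝ => Real.exp (-(π/2)) - Real.exp (π/2) * Real.exp (-(π * I)))
        atTop (nhds (Real.exp (-(π/2)) - Real.exp (π/2) * 0)) :=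
      tendsto_const_nhds.sub (tendsto_const_nhds.mul t2)
    have hden : Tendsto (fun I : ℝ => 1 - Real.exp (-(π * I))) atTop (nhds (1 - 0)) :=
      tendsto_const_nhds.sub t2
    have := hnum.div hden (by norm_num)
    simp only [mul_zero, sub_zero, div_one] at this
    exact this
  have tall := ((t1.pow 2).mul t3)
  rw [one_pow, one_mul] at tall
  apply tall.congr'
  filter_upwards [eventually_gt_atTop (1:ℝ)] with I hI
  exact (hfactor I hI).symm


/-- Bifurcation value on `(1, +∞)`: if `1/|μ| > e^{-π/2}` there is a unique
`I_r > 1` with `α(I_r) = 1/|μ|`, with `α > 1/|μ|` on `(1, I_r)` and `α < 1/|μ|`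
on `(I_r, +∞)`; if `1/|μ| ≤ e^{-π/2}` then `α > 1/|μ|` on all of `(1, +∞)`. -/
theorem alphaFn_bifurcation_pos (μ : ℝ) (hμ : μ ≠ 0) :
    (Real.exp (-(π / 2)) < 1 / |μ| →
      ∃ Ir : ℝ, 1 < Ir ∧ alphaFn Ir = 1 / |μ| ∧
        (∀ I : ℝ, 1 < I → alphaFn I = 1 / |μ| → I = Ir) ∧
        (∀ I ∈ Set.Ioo 1 Ir, 1 / |μ| < alphaFn I) ∧
        (∀ I : ℝ, Ir < I → alphaFn I < 1 / |μ|)) ∧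
    (1 / |μ| ≤ Real.exp (-(π / 2)) → ∀ I : ℝ, 1 < I → 1 / |μ| < alphaFn I) := by
  have hbelow : ∀ I : ℝ, 1 < I → Real.exp (-(π / 2)) < alphaFn I := by
    intro I hI
    have hmem : I ∈ Set.Ioi (1:ℝ) := Set.mem_Ioi.2 hI
    have hmem' : I + 1 ∈ Set.Ioi (1:ℝ) := Set.mem_Ioi.2 (by linarith)
    have hmono : alphaFn (I + 1) < alphaFn I :=
      alpha_strictAnti hmem hmem' (by linarith)
    have hge : Real.exp (-(π / 2)) ≤ alphaFn (I + 1) := by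
      apply le_of_tendsto alpha_tendsto_atTop
      filter_upwards [eventually_ge_atTop (I + 1)] with J hJ
      rcases eq_or_lt_of_le hJ with h | h
      · exact le_of_eq (congrArg _ h.symm)
      · exact (alpha_strictAnti hmem' (Set.mem_Ioi.2 (by linarith)) h).le
    linarith
  constructor
  · intro hlt
    have h0 : ∀ᶠ I in nhdsWithin 1 (Set.Ioi 1), 1 / |μ| < alphaFn I :=
      alpha_tendsto_one.eventually_gt_atTop _
    obtain ⟨I₀, hI₀c, hI₀mem⟩ := (h0.and self_mem_nhdsWithin).exists
    have hI₀1 : (1:ℝ) < I₀ := hI₀mem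
    have h1 : ∀ᶠ I in atTop, alphaFn I < 1 / |μ| :=
      alpha_tendsto_atTop.eventually_lt_const hlt
    obtain ⟨I₁, hI₁c, hI₁gt⟩ := (h1.and (eventually_gt_atTop (max 1 I₀))).exists
    have hI₁1 : (1:ℝ) < I₁ := lt_of_le_of_lt (le_max_left _ _) hI₁gt
    have hI₀₁ : I₀ ≤ I₁ := le_of_lt (lt_of_le_of_lt (le_max_right _ _) hI₁gt)
    have hIcc : Set.Icc I₀ I₁ ⊆ Set.Ioi 1 := fun x hx => Set.mem_Ioi.2 (lt_of_lt_of_le hI₀1 hx.1)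
    have hivt := intermediate_value_Icc' hI₀₁ (alpha_contOn.mono hIcc)
    have hcmem : 1 / |μ| ∈ Set.Icc (alphaFn I₁) (alphaFn I₀) := ⟨hI₁c.le, hI₀c.le⟩
    obtain ⟨Ir, hIrmem, hIr⟩ := hivt hcmem
    have hIr1 : 1 < Ir := lt_of_lt_of_le hI₀1 hIrmem.1
    refine ⟨Ir, hIr1, hIr, ?_, ?_, ?_⟩
    · intro I hI hIeq
      exact alpha_strictAnti.injOn (Set.mem_Ioi.2 hI) (Set.mem_Ioi.2 hIr1) (hIeq.trans hIr.symm)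
    · rintro I ⟨h1', h2'⟩
      have := alpha_strictAnti (Set.mem_Ioi.2 h1') (Set.mem_Ioi.2 hIr1) h2'
      rw [hIr] at this
      exact this
    · intro I hI
      have := alpha_strictAnti (Set.mem_Ioi.2 hIr1) (Set.mem_Ioi.2 (lt_trans hIr1 hI)) hI
      rw [hIr] at this
      exact this
  · intro hle I hI
    exact lt_of_le_of_lt hle (hbelow I hI)
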